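/- The code C of Construction 4 is MDS: for every subset S ⊆ {1,…,n} with |S| = k, any two codewords (C_1,…,C_n) and (C'_1,…,C'_n) in C satisfying C_j = C'_j for all j ∈ S are equal. -/

import Mathlib

open Matrix
open Fin.NatCast

private lemma gamma_pow_inj {F : Type*} [Field F] [Fintype F] {n : ℕ} (hn : 2 ≤ n)
    (hF : n + 1 ≤ Fintype.card F) (γ : F)
    (hγ : ∀ x : F, x ≠ 0 → ∃ m : ℕ, x = γ ^ m) :
    ∀ a b : ℕ, a < n → b < n → γ ^ a = γ ^ b → a = b := by
  classical
  have hγ0 : γ ≠ 0 := by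
    intro h0
    have hx : ((Finset.univ : Finset F) \ {0, 1}).Nonempty := by
      apply Finset.card_pos.mp
      have h1 : ({0, 1} : Finset F).card ≤ 2 :=
        (Finset.card_insert_le _ _).trans (by simp)
      have h2 := Finset.card_sdiff_of_subset (Finset.subset_univ ({0, 1} : Finset F))
      rw [Finset.card_univ] at h2
      omega
    obtain ⟨x, hx⟩ := hx
    rw [Finset.mem_sdiff, Finset.mem_insert, Finset.mem_singleton] at hx
    have hx0 : x ≠ 0 := fun h => hx.2 (Or.inl h)
    have hx1 : x ≠ 1 := fun h => hx.2 (Or.inr h)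
    obtain ⟨m, hm⟩ := hγ x hx0
    subst h0
    rcases Nat.eq_zero_or_pos m with h | h
    · rw [h, pow_zero] at hm; exact hx1 hm
    · rw [zero_pow (by omega)] at hm; exact hx0 hm
  have key : ∀ a b : ℕ, a < b → b < n → γ ^ a ≠ γ ^ b := by
    intro a b hab hbn hEq
    have hd : γ ^ (b - a) = 1 := by
      have h : γ ^ a * γ ^ (b - a) = γ ^ a * 1 := by
        rw [mul_one, ← pow_add]
        rw [show a + (b - a) = b by omega, hEq]
      exact mul_left_cancel₀ (pow_ne_zero _ hγ0) h
    set d := b - a with hdd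
    have hd0 : 0 < d := by omega
    have hsub : (Finset.univ.erase (0 : F)) ⊆ (Finset.range d).image (γ ^ ·) := by
      intro x hx
      obtain ⟨m, hm⟩ := hγ x (Finset.ne_of_mem_erase hx)
      have hx' : x = γ ^ (m % d) := by
        conv_lhs => rw [hm, ← Nat.div_add_mod m d]
        rw [pow_add, pow_mul, hd, one_pow, one_mul]
      exact Finset.mem_image.mpr ⟨m % d, Finset.mem_range.mpr (Nat.mod_lt _ hd0), hx'.symm⟩
    have h1 := Finset.card_le_card hsub
    have h2 := Finset.card_image_le (s := Finset.range d) (f := (γ ^ ·))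
    rw [Finset.card_range] at h2
    have h3 : (Finset.univ.erase (0 : F)).card = Fintype.card F - 1 := by
      rw [Finset.card_erase_of_mem (Finset.mem_univ _), Finset.card_univ]
    omega
  intro a b ha hb hEq
  rcases lt_trichotomy a b with h | h | h
  · exact absurd hEq (key a b h hb)
  · exact h
  · exact absurd hEq.symm (key b a h ha)

private lemma diff_mulVec_inj {F : Type*} [Field F] {X : Type*} [Fintype X] [DecidableEq X]
    {A B : Matrix X X F} {c d : F} {m : ℕ} (hcd : c ≠ d) (hAB : Commute A B)
    (hAm : ∀ v : X → F, (A ^ m) *ᵥ v = c • v) (hBm : ∀ v : X → F, (B ^ m) *ᵥ v = d • v)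
    (v : X → F) (hv : (A - B) *ᵥ v = 0) : v = 0 := by
  have h1 : A *ᵥ v = B *ᵥ v := by
    rw [Matrix.sub_mulVec] at hv
    exact sub_eq_zero.mp hv
  have ht : ∀ t : ℕ, (A ^ t) *ᵥ v = (B ^ t) *ᵥ v := by
    intro t
    induction t with
    | zero => simp
    | succ t ih =>
      calc (A ^ (t + 1)) *ᵥ v = (A ^ t * A) *ᵥ v := by rw [pow_succ]
        _ = (A ^ t) *ᵥ (A *ᵥ v) := by rw [Matrix.mulVec_mulVec]
        _ = (A ^ t) *ᵥ (B *ᵥ v) := by rw [h1]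
        _ = (A ^ t * B) *ᵥ v := by rw [Matrix.mulVec_mulVec]
        _ = (B * A ^ t) *ᵥ v := by rw [(hAB.pow_left t).eq]
        _ = B *ᵥ ((A ^ t) *ᵥ v) := by rw [Matrix.mulVec_mulVec]
        _ = B *ᵥ ((B ^ t) *ᵥ v) := by rw [ih]
        _ = (B ^ (t + 1)) *ᵥ v := by rw [Matrix.mulVec_mulVec, ← pow_succ']
  have h2 : c • v = d • v := by rw [← hAm v, ← hBm v, ht m]
  have h3 : (c - d) • v = 0 := by rw [sub_smul, h2, sub_self]
  rcases smul_eq_zero.mp h3 with h | h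
  · exact absurd (sub_eq_zero.mp h) hcd
  · exact h

private lemma elim_lemma {F : Type*} [Field F] {n : ℕ} {X : Type*} [Fintype X] [DecidableEq X]
    (A : Fin n → Matrix X X F)
    (hcomm : ∀ i j, Commute (A i) (A j))
    (hinj : ∀ i j, i ≠ j → ∀ v : X → F, (A i - A j) *ᵥ v = 0 → v = 0) :
    ∀ (s : ℕ) (T : Finset (Fin n)) (_ : T.card = s)
      (W : Fin n → X → F) (_ : ∀ i ∉ T, W i = 0)
      (_ : ∀ t < s, ∑ i, (A i ^ t) *ᵥ W i = 0) (i : Fin n), W i = 0 := by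
  intro s
  induction s with
  | zero =>
    intro T hT W hsupp _ i
    exact hsupp i (by simp [Finset.card_eq_zero.mp hT])
  | succ s ih =>
    intro T hT W hsupp hrel i
    obtain ⟨j, hj⟩ : T.Nonempty := Finset.card_pos.mp (by omega)
    set W' : Fin n → X → F := fun i => (A i - A j) *ᵥ W i with hW'
    have hsupp' : ∀ i ∉ T.erase j, W' i = 0 := by
      intro i hi
      by_cases hij : i = j
      · subst hij; simp [hW']
      · have hiT : i ∉ T := fun h => hi (Finset.mem_erase.mpr ⟨hij, h⟩)
        simp [hW', hsupp i hiT]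
    have hrel' : ∀ t < s, ∑ i, (A i ^ t) *ᵥ W' i = 0 := by
      intro t ht
      have e1 : ∀ i : Fin n, (A i ^ t) *ᵥ W' i
          = (A i ^ (t + 1)) *ᵥ W i - A j *ᵥ ((A i ^ t) *ᵥ W i) := by
        intro i
        calc (A i ^ t) *ᵥ W' i
            = (A i ^ t) *ᵥ (A i *ᵥ W i - A j *ᵥ W i) := by
              simp only [hW']; rw [Matrix.sub_mulVec]
          _ = (A i ^ t) *ᵥ (A i *ᵥ W i) - (A i ^ t) *ᵥ (A j *ᵥ W i) := Matrix.mulVec_sub _ _ _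
          _ = (A i ^ (t + 1)) *ᵥ W i - A j *ᵥ ((A i ^ t) *ᵥ W i) := by
              rw [Matrix.mulVec_mulVec, Matrix.mulVec_mulVec, Matrix.mulVec_mulVec,
                ← pow_succ, ((hcomm i j).pow_left t).eq]
      calc ∑ i, (A i ^ t) *ᵥ W' i
          = ∑ i, ((A i ^ (t + 1)) *ᵥ W i - A j *ᵥ ((A i ^ t) *ᵥ W i)) := by
            exact Finset.sum_congr rfl fun i _ => e1 i
        _ = (∑ i, (A i ^ (t + 1)) *ᵥ W i) - ∑ i, A j *ᵥ ((A i ^ t) *ᵥ W i) :=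
            Finset.sum_sub_distrib _ _
        _ = 0 - A j *ᵥ (∑ i, (A i ^ t) *ᵥ W i) := by
            rw [hrel (t + 1) (by omega)]
            congr 1
            exact (map_sum (Matrix.mulVecLin (A j)) _ _).symm
        _ = 0 := by rw [hrel t (by omega), Matrix.mulVec_zero, sub_zero]
    have hz : ∀ i, W' i = 0 :=
      ih (T.erase j) (by rw [Finset.card_erase_of_mem hj]; omega) W' hsupp' hrel'
    have hWi : ∀ i, i ≠ j → W i = 0 := fun i hij => hinj i j hij (W i) (hz i)
    have h0 := hrel 0 (Nat.succ_pos s)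
    simp only [pow_zero, Matrix.one_mulVec] at h0
    have hj0 : W j = 0 := by
      rw [Finset.sum_eq_single j (fun b _ hb => hWi b hb)
        (fun h => absurd (Finset.mem_univ j) h)] at h0
      exact h0
    by_cases hij : i = j
    · subst hij; exact hj0
    · exact hWi i hij

open Matrix in
/-- Construction 4 is MDS: any `k = n - r` nodes determine the whole codeword. -/
theorem construction4_is_MDS
    (F : Type*) [Field F] [Fintype F]
    (n r : ℕ) (hr : 1 ≤ r) (hrn : r < n)
    (hF : n + 1 ≤ Fintype.card F)
    (γ : F) (hγprim : ∀ x : F, x ≠ 0 → ∃ m : ℕ, x = γ ^ m)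
    (lam : Fin (n - 1) → Fin r → F)
    (hlam : ∀ (i : Fin (n - 1)) (u : Fin r),
      lam i u = if (u : ℕ) = 0 then γ ^ ((i : ℕ) + 1) else 1)
    (A : Fin n → Matrix (Fin (n - 1) → Fin r) (Fin (n - 1) → Fin r) F)
    (hA : ∀ (i : Fin n) (hi : (i : ℕ) < n - 1),
      A i = Matrix.of fun a b : Fin (n - 1) → Fin r =>
        if b = Function.update a ⟨i, hi⟩
            ⟨((a ⟨i, hi⟩ : ℕ) + 1) % r, Nat.mod_lt _ hr⟩
        then lam ⟨i, hi⟩ (a ⟨i, hi⟩) else 0)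
    (hAn : A ⟨n - 1, by omega⟩ = 1)
    (C C' : Fin n → (Fin (n - 1) → Fin r) → F)
    (hC : ∀ t < r, ∑ i, (A i ^ t) *ᵥ C i = 0)
    (hC' : ∀ t < r, ∑ i, (A i ^ t) *ᵥ C' i = 0)
    (S : Finset (Fin n)) (hS : S.card = n - r)
    (heq : ∀ j ∈ S, C j = C' j) :
    C = C' := by
  haveI : NeZero r := ⟨by omega⟩
  have hn2 : 2 ≤ n := by omega
  -- rewrite the Fin mk into Fin addition
  have hmk : ∀ x : Fin r, (⟨((x : ℕ) + 1) % r, Nat.mod_lt _ hr⟩ : Fin r) = x + 1 := by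
    intro x
    have h : ((x : ℕ) + 1) % r = ((x : ℕ) + 1 % r) % r := by
      conv_rhs => rw [Nat.add_mod, Nat.mod_mod_of_dvd 1 dvd_rfl, ← Nat.add_mod]
    apply Fin.ext
    rw [Fin.add_def, Fin.val_one']
    exact h
  have hA' : ∀ (i : Fin n) (hi : (i : ℕ) < n - 1),
      A i = Matrix.of fun a b : Fin (n - 1) → Fin r =>
        if b = Function.update a ⟨i, hi⟩ (a ⟨i, hi⟩ + 1)
        then lam ⟨i, hi⟩ (a ⟨i, hi⟩) else 0 := by
    intro i hi
    rw [hA i hi]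
    congr 1
    funext a b
    rw [hmk]
  have hAone : ∀ i : Fin n, ¬ ((i : ℕ) < n - 1) → A i = 1 := by
    intro i hi
    have h : i = ⟨n - 1, by omega⟩ := Fin.ext (by have := i.isLt; simp; omega)
    rw [h, hAn]
  -- single mulVec step
  have hmulv : ∀ (i : Fin n) (hi : (i : ℕ) < n - 1) (w : (Fin (n - 1) → Fin r) → F)
      (a : Fin (n - 1) → Fin r),
      (A i *ᵥ w) a = lam ⟨i, hi⟩ (a ⟨i, hi⟩)
        * w (Function.update a ⟨i, hi⟩ (a ⟨i, hi⟩ + 1)) := by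
    intro i hi w a
    rw [hA' i hi]
    simp [Matrix.mulVec, dotProduct, ite_mul, zero_mul]
  -- powers acting on vectors
  have hpowv : ∀ (i : Fin n) (hi : (i : ℕ) < n - 1) (t : ℕ)
      (w : (Fin (n - 1) → Fin r) → F) (a : Fin (n - 1) → Fin r),
      ((A i ^ t) *ᵥ w) a
        = (∏ s ∈ Finset.range t, lam ⟨i, hi⟩ (a ⟨i, hi⟩ + (s : Fin r)))
          * w (Function.update a ⟨i, hi⟩ (a ⟨i, hi⟩ + (t : Fin r))) := by
    intro i hi t
    induction t with
    | zero =>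
      intro w a
      simp [Function.update_eq_self]
    | succ t ihh =>
      intro w a
      rw [pow_succ', ← Matrix.mulVec_mulVec, hmulv i hi, ihh]
      simp only [Function.update_self, Function.update_idem]
      have hc : ∀ s : ℕ, a ⟨i, hi⟩ + 1 + (s : Fin r) = a ⟨i, hi⟩ + ((s + 1 : ℕ) : Fin r) := by
        intro s
        push_cast
        abel
      rw [Finset.prod_range_succ']
      simp only [hc]
      rw [Nat.cast_zero, add_zero]
      ring
  -- r-th power is scalar
  have hpowr : ∀ (i : Fin n) (hi : (i : ℕ) < n - 1) (v : (Fin (n - 1) → Fin r) → F),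
      (A i ^ r) *ᵥ v = γ ^ ((i : ℕ) + 1) • v := by
    intro i hi v
    funext a
    rw [hpowv i hi r v a, Fin.natCast_self, add_zero, Function.update_eq_self]
    have h2 : ∏ s ∈ Finset.range r, lam ⟨i, hi⟩ (a ⟨i, hi⟩ + (s : Fin r))
        = γ ^ ((i : ℕ) + 1) := by
      rw [← Fin.prod_univ_eq_prod_range (fun s => lam ⟨i, hi⟩ (a ⟨i, hi⟩ + (s : Fin r))) r]
      simp only [Fin.cast_val_eq_self]
      rw [Fintype.prod_equiv (Equiv.addLeft (a ⟨i, hi⟩))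
        (fun s => lam ⟨i, hi⟩ (a ⟨i, hi⟩ + s)) (fun u => lam ⟨i, hi⟩ u) (fun x => rfl)]
      calc (∏ u : Fin r, lam ⟨(i : ℕ), hi⟩ u)
          = ∏ u : Fin r, if u = 0 then γ ^ ((i : ℕ) + 1) else 1 := by
            refine Finset.prod_congr rfl fun u _ => ?_
            rw [hlam]
            exact if_congr (by rw [Fin.ext_iff, Fin.val_zero]) rfl rfl
        _ = γ ^ ((i : ℕ) + 1) := by
            rw [Finset.prod_ite_eq' Finset.univ (0 : Fin r) fun _ => γ ^ ((i : ℕ) + 1)]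
            simp
    rw [h2]
    simp [mul_comm]
  -- commutativity
  have hcomm : ∀ i j : Fin n, Commute (A i) (A j) := by
    have hprod : ∀ (i j : Fin n) (hi : (i : ℕ) < n - 1) (hj : (j : ℕ) < n - 1),
        (⟨(i : ℕ), hi⟩ : Fin (n - 1)) ≠ ⟨(j : ℕ), hj⟩ →
        ∀ a c : Fin (n - 1) → Fin r,
        (A i * A j) a c =
          if c = Function.update (Function.update a ⟨(i : ℕ), hi⟩ (a ⟨(i : ℕ), hi⟩ + 1))
              ⟨(j : ℕ), hj⟩ (a ⟨(j : ℕ), hj⟩ + 1)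
          then lam ⟨(i : ℕ), hi⟩ (a ⟨(i : ℕ), hi⟩) * lam ⟨(j : ℕ), hj⟩ (a ⟨(j : ℕ), hj⟩)
          else 0 := by
      intro i j hi hj hne a c
      rw [Matrix.mul_apply]
      rw [Finset.sum_eq_single (Function.update a ⟨(i : ℕ), hi⟩ (a ⟨(i : ℕ), hi⟩ + 1))]
      · rw [hA' i hi, hA' j hj]
        simp only [Matrix.of_apply, if_pos rfl]
        rw [Function.update_of_ne hne.symm]
        rw [mul_ite, mul_zero]
        simp only [if_true]
      · intro b _ hb
        rw [hA' i hi]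
        simp only [Matrix.of_apply, if_neg hb, zero_mul]
      · intro h
        exact absurd (Finset.mem_univ _) h
    have key : ∀ (i j : Fin n) (hi : (i : ℕ) < n - 1) (hj : (j : ℕ) < n - 1),
        i ≠ j → A i * A j = A j * A i := by
      intro i j hi hj hij
      have hne : (⟨(i : ℕ), hi⟩ : Fin (n - 1)) ≠ ⟨(j : ℕ), hj⟩ := by
        intro h
        have hv : (i : ℕ) = (j : ℕ) := by simpa [Fin.ext_iff] using h
        exact hij (Fin.ext hv)
      ext a c
      rw [hprod i j hi hj hne a c, hprod j i hj hi hne.symm a c,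
        Function.update_comm hne, mul_comm]
    intro i j
    by_cases hi : (i : ℕ) < n - 1
    · by_cases hj : (j : ℕ) < n - 1
      · by_cases hij : i = j
        · subst hij; exact Commute.refl _
        · exact key i j hi hj hij
      · rw [hAone j hj]; exact Commute.one_right _
    · rw [hAone i hi]; exact Commute.one_left _
  -- exponents
  set e : Fin n → ℕ := fun i => if (i : ℕ) < n - 1 then (i : ℕ) + 1 else 0 with he
  have hpowE : ∀ (i : Fin n) (v : (Fin (n - 1) → Fin r) → F),
      (A i ^ r) *ᵥ v = γ ^ (e i) • v := by
    intro i v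
    by_cases hi : (i : ℕ) < n - 1
    · rw [he]; simp only [if_pos hi]; exact hpowr i hi v
    · rw [he]; simp only [if_neg hi]
      rw [hAone i hi, one_pow, Matrix.one_mulVec, pow_zero, one_smul]
  have hEinj : ∀ i j : Fin n, i ≠ j → γ ^ (e i) ≠ γ ^ (e j) := by
    intro i j hij hEq
    have h1 : e i < n := by rw [he]; dsimp only; split_ifs <;> omega
    have h2 : e j < n := by rw [he]; dsimp only; split_ifs <;> omega
    have h3 := gamma_pow_inj hn2 hF γ hγprim (e i) (e j) h1 h2 hEq
    rw [he] at h3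
    dsimp only at h3
    apply hij
    apply Fin.ext
    have hi := i.isLt
    have hj := j.isLt
    split_ifs at h3 <;> omega
  have hinj : ∀ i j : Fin n, i ≠ j → ∀ v : (Fin (n - 1) → Fin r) → F,
      (A i - A j) *ᵥ v = 0 → v = 0 :=
    fun i j hij v hv =>
      diff_mulVec_inj (hEinj i j hij) (hcomm i j) (hpowE i) (hpowE j) v hv
  -- assemble
  set W : Fin n → (Fin (n - 1) → Fin r) → F := fun i => C i - C' i with hWdef
  have hsupp : ∀ i ∉ Sᶜ, W i = 0 := by
    intro i hi
    rw [Finset.notMem_compl] at hi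
    rw [hWdef]
    exact sub_eq_zero_of_eq (heq i hi)
  have hcard : (Sᶜ : Finset (Fin n)).card = r := by
    rw [Finset.card_compl, hS, Fintype.card_fin]
    omega
  have hrel : ∀ t < r, ∑ i, (A i ^ t) *ᵥ W i = 0 := by
    intro t ht
    have h : ∑ i, ((A i ^ t) *ᵥ C i - (A i ^ t) *ᵥ C' i) = 0 := by
      rw [Finset.sum_sub_distrib, hC t ht, hC' t ht, sub_zero]
    calc ∑ i, (A i ^ t) *ᵥ W i
        = ∑ i, ((A i ^ t) *ᵥ C i - (A i ^ t) *ᵥ C' i) :=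
          Finset.sum_congr rfl fun i _ => by rw [hWdef]; exact Matrix.mulVec_sub _ _ _
      _ = 0 := h
  have hWz : ∀ i, W i = 0 := elim_lemma A hcomm hinj r Sᶜ hcard W hsupp hrel
  funext i
  exact sub_eq_zero.mp (hWz i)
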